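/- (Part I of the self-testing theorem.) Let h be an m×n ROCN matrix (m ≤ n), let A_1,…,A_m and B_1,…,B_n be Hermitian operators on finite-dimensional complex Hilbert spaces H_A and H_B with A_i² = 1 and B_j² = 1, and let ψ ∈ H_A ⊗ H_B be a unit vector whose reduced density matrix ρ_A = Tr_B |ψ⟩⟨ψ| is invertible (full rank). If ⟨ψ| Σ_{i,j} h_{ij}(A_i ⊗ B_j) |ψ⟩ = n, then for every j ∈ {1,…,n} one has (Σ_{i=1}^m h_{ij} A_i ⊗ B_j) ψ = ψ, and moreover Σ_{1 ≤ i < k ≤ m} h_{ij} h_{kj} (A_i A_k + A_k A_i) = 0 for every j. -/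
import Mathlib


open Matrix Kronecker Finset

/-- An `m × n` real matrix `h` (with `m ≤ n`) is ROCN (row-orthogonal, column-normalized)
if all its rows are nonzero, its rows are pairwise orthogonal, and every column has
unit Euclidean norm. -/
def IsROCN {m n : ℕ} (h : Matrix (Fin m) (Fin n) ℝ) : Prop :=
  m ≤ n ∧
  (∀ i, ∃ j, h i j ≠ 0) ∧
  (∀ i k, i ≠ k → ∑ j, h i j * h k j = 0) ∧
  (∀ j, ∑ i, (h i j) ^ 2 = 1)

/-- The reduced density matrix `ρ_A = Tr_B |ψ⟩⟨ψ|` of a bipartite vector `ψ`. -/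
noncomputable def rhoA {dA dB : ℕ} (ψ : Fin dA × Fin dB → ℂ) :
    Matrix (Fin dA) (Fin dA) ℂ :=
  Matrix.of fun a a' => ∑ b, ψ (a, b) * star (ψ (a', b))

lemma kronecker_conjT {p q : ℕ} (X : Matrix (Fin p) (Fin p) ℂ) (Y : Matrix (Fin q) (Fin q) ℂ) :
    (X ⊗ₖ Y)ᴴ = Xᴴ ⊗ₖ Yᴴ := by
  ext ⟨a, b⟩ ⟨c, d⟩
  simp [conjTranspose_apply, kroneckerMap_apply]

lemma sum_kronecker' {ι : Type*} {p q : ℕ} (s : Finset ι)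
    (X : ι → Matrix (Fin p) (Fin p) ℂ) (Y : Matrix (Fin q) (Fin q) ℂ) :
    (∑ i ∈ s, X i) ⊗ₖ Y = ∑ i ∈ s, X i ⊗ₖ Y := by
  ext ⟨a, b⟩ ⟨c, d⟩
  simp [Matrix.sum_apply, kroneckerMap_apply, Finset.sum_mul]

lemma sum_mulVec' {ι κ : Type*} [Fintype κ] (s : Finset ι)
    (M : ι → Matrix κ κ ℂ) (v : κ → ℂ) :
    (∑ i ∈ s, M i).mulVec v = ∑ i ∈ s, (M i).mulVec v := by
  ext x
  simp only [Matrix.mulVec, dotProduct, Matrix.sum_apply, Finset.sum_mul,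
    Finset.sum_apply]
  exact Finset.sum_comm

lemma dotProduct_sum' {ι κ : Type*} [Fintype κ] (s : Finset ι)
    (u : κ → ℂ) (w : ι → (κ → ℂ)) :
    u ⬝ᵥ (∑ i ∈ s, w i) = ∑ i ∈ s, u ⬝ᵥ w i := by
  simp only [dotProduct, Finset.sum_apply, Finset.mul_sum]
  exact Finset.sum_comm

lemma double_sum_decomp {N : ℕ} {α : Type*} [AddCommMonoid α] (f : Fin N → Fin N → α) :
    ∑ i, ∑ k, f i k =
      (∑ i, ∑ k, if i < k then f i k + f k i else 0) + ∑ i, f i i := by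
  have key : ∀ i k : Fin N,
      f i k = (if i < k then f i k else 0) + (if k < i then f i k else 0)
        + (if k = i then f i k else 0) := by
    intro i k
    rcases lt_trichotomy i k with hl | he | hg
    · simp [hl, asymm hl, hl.ne']
    · subst he; simp
    · simp [hg, asymm hg, hg.ne]
  calc ∑ i, ∑ k, f i k
      = ∑ i, ∑ k, ((if i < k then f i k else 0) + (if k < i then f i k else 0)
        + (if k = i then f i k else 0)) := by
        refine Finset.sum_congr rfl fun i _ => Finset.sum_congr rfl fun k _ => key i k
    _ = ((∑ i, ∑ k, if i < k then f i k else 0) + ∑ i, ∑ k, if k < i then f i k else 0)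
        + ∑ i, ∑ k, if k = i then f i k else 0 := by
        simp [Finset.sum_add_distrib]
    _ = (∑ i, ∑ k, if i < k then f i k + f k i else 0) + ∑ i, f i i := by
        have hswap : (∑ i : Fin N, ∑ k : Fin N, if k < i then f i k else 0)
            = ∑ i : Fin N, ∑ k : Fin N, if i < k then f k i else 0 := Finset.sum_comm
        rw [hswap]
        refine congrArg₂ (· + ·) ?_ ?_
        · rw [← Finset.sum_add_distrib]
          refine Finset.sum_congr rfl fun i _ => ?_
          rw [← Finset.sum_add_distrib]
          refine Finset.sum_congr rfl fun k _ => ?_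
          split <;> simp
        · refine Finset.sum_congr rfl fun i _ => ?_
          simp

/-- (Part I of the self-testing theorem.) If a unit vector `ψ` whose
reduced state `ρ_A` is full rank attains `⟨ψ| Σᵢⱼ hᵢⱼ (Aᵢ ⊗ Bⱼ) |ψ⟩ = n` for an ROCN
matrix `h` and Hermitian involutions `Aᵢ`, `Bⱼ`, then `(Σᵢ hᵢⱼ Aᵢ ⊗ Bⱼ)ψ = ψ` for every
`j`, and `Σ_{i<k} hᵢⱼ hₖⱼ {Aᵢ, Aₖ} = 0` for every `j`. -/
theorem rocn_self_testing_part_I {m n dA dB : ℕ}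
    (h : Matrix (Fin m) (Fin n) ℝ) (hROCN : IsROCN h)
    (A : Fin m → Matrix (Fin dA) (Fin dA) ℂ)
    (B : Fin n → Matrix (Fin dB) (Fin dB) ℂ)
    (hAH : ∀ i, (A i)ᴴ = A i) (hBH : ∀ j, (B j)ᴴ = B j)
    (hA2 : ∀ i, A i * A i = 1) (hB2 : ∀ j, B j * B j = 1)
    (ψ : Fin dA × Fin dB → ℂ) (hψ : star ψ ⬝ᵥ ψ = 1)
    (hfull : IsUnit (rhoA ψ))
    (hmax : star ψ ⬝ᵥ (∑ i, ∑ j, (h i j : ℂ) • (A i ⊗ₖ B j)).mulVec ψ = (n : ℂ)) :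
    (∀ j, (∑ i, (h i j : ℂ) • (A i ⊗ₖ B j)).mulVec ψ = ψ) ∧
    (∀ j, ∑ i, ∑ k,
      (if i < k then h i j * h k j else 0) • (A i * A k + A k * A i) = 0) := by
  obtain ⟨-, -, hsum0, hcol⟩ := hROCN
  open ComplexOrder in
  set S : Fin n → Matrix (Fin dA) (Fin dA) ℂ := fun j => ∑ i, (h i j : ℂ) • A i with hS
  set T : Fin n → Matrix (Fin dA) (Fin dA) ℂ := fun j =>
    ∑ i, ∑ k, (if i < k then (h i j : ℂ) * (h k j : ℂ) else 0) • (A i * A k + A k * A i) with hT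
  set M : Fin n → Matrix (Fin dA × Fin dB) (Fin dA × Fin dB) ℂ := fun j =>
    ∑ i, (h i j : ℂ) • (A i ⊗ₖ B j) with hM
  have hMSB : ∀ j, M j = S j ⊗ₖ B j := by
    intro j
    rw [hS, hM]
    rw [sum_kronecker']
    exact Finset.sum_congr rfl fun i _ => (smul_kronecker _ _ _).symm
  have hSH : ∀ j, (S j)ᴴ = S j := by
    intro j
    rw [hS]
    simp only [Matrix.conjTranspose_sum, Matrix.conjTranspose_smul, hAH, Complex.star_def,
      Complex.conj_ofReal]
  have hMH : ∀ j, (M j)ᴴ = M j := by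
    intro j
    rw [hMSB, kronecker_conjT, hSH, hBH]
  -- S j ^ 2 = 1 + T j
  have hS2 : ∀ j, S j * S j = 1 + T j := by
    intro j
    have expand : S j * S j
        = ∑ i, ∑ k, ((h i j : ℂ) * (h k j : ℂ)) • (A i * A k) := by
      rw [hS, Finset.sum_mul_sum]
      refine Finset.sum_congr rfl fun i _ => Finset.sum_congr rfl fun k _ => ?_
      rw [smul_mul_smul_comm]
    have hdiag : ∑ i, ((h i j : ℂ) * (h i j : ℂ)) • (A i * A i) = 1 := by
      have e1 : ∑ i, ((h i j : ℂ) * (h i j : ℂ)) • (A i * A i)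
          = ∑ i, ((h i j : ℂ) * (h i j : ℂ)) • (1 : Matrix (Fin dA) (Fin dA) ℂ) :=
        Finset.sum_congr rfl fun i _ => by rw [hA2]
      rw [e1, ← Finset.sum_smul]
      have hcast : (∑ i, (h i j : ℂ) * (h i j : ℂ)) = 1 := by
        have h2 : ((∑ i, (h i j) ^ 2 : ℝ) : ℂ) = 1 := by rw [hcol j]; norm_num
        push_cast at h2
        convert h2 using 2 with i
        ring
      rw [hcast, one_smul]
    have hoff : (∑ i, ∑ k, if i < k
          then ((h i j : ℂ) * (h k j : ℂ)) • (A i * A k)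
            + ((h k j : ℂ) * (h i j : ℂ)) • (A k * A i) else 0) = T j := by
      rw [hT]
      refine Finset.sum_congr rfl fun i _ => Finset.sum_congr rfl fun k _ => ?_
      split
      · rw [smul_add]
        congr 2
        rw [mul_comm ((h k j : ℂ))]
      · simp
    rw [expand, double_sum_decomp (fun i k => ((h i j : ℂ) * (h k j : ℂ)) • (A i * A k)),
      hoff, hdiag, add_comm]
  -- sum of T is 0
  have hT0 : ∑ j, T j = 0 := by
    rw [hT]
    have h1 : ∑ j, ∑ i, ∑ k,
        (if i < k then (h i j : ℂ) * (h k j : ℂ) else 0) • (A i * A k + A k * A i)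
        = ∑ i, ∑ k, ∑ j,
        (if i < k then (h i j : ℂ) * (h k j : ℂ) else 0) • (A i * A k + A k * A i) := by
      rw [Finset.sum_comm]
      exact Finset.sum_congr rfl fun i _ => Finset.sum_comm
    rw [h1]
    refine Finset.sum_eq_zero fun i _ => Finset.sum_eq_zero fun k _ => ?_
    by_cases hik : i < k
    · simp only [hik, if_true]
      rw [← Finset.sum_smul]
      have hz : (∑ j, (h i j : ℂ) * (h k j : ℂ)) = 0 := by
        have h0 : ((∑ j, h i j * h k j : ℝ) : ℂ) = 0 := by rw [hsum0 i k hik.ne]; norm_num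
        push_cast at h0
        exact h0
      rw [hz, zero_smul]
    · simp [hik]
  -- M j ^2 = 1 + T j ⊗ 1
  have hM2 : ∀ j, M j * M j = 1 + T j ⊗ₖ (1 : Matrix (Fin dB) (Fin dB) ℂ) := by
    intro j
    rw [hMSB, ← Matrix.mul_kronecker_mul, hS2, hB2, Matrix.add_kronecker,
      Matrix.one_kronecker_one]
  have hsumM2 : ∑ j, M j * M j = (n : ℂ) • 1 := by
    calc ∑ j, M j * M j
        = ∑ j : Fin n, ((1 : Matrix (Fin dA × Fin dB) (Fin dA × Fin dB) ℂ)
            + T j ⊗ₖ (1 : Matrix (Fin dB) (Fin dB) ℂ)) :=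
          Finset.sum_congr rfl fun j _ => hM2 j
      _ = ∑ j : Fin n, (1 : Matrix (Fin dA × Fin dB) (Fin dA × Fin dB) ℂ)
            + (∑ j, T j) ⊗ₖ (1 : Matrix (Fin dB) (Fin dB) ℂ) := by
          rw [Finset.sum_add_distrib, sum_kronecker']
      _ = (n : ℂ) • 1 := by
          rw [hT0, Matrix.zero_kronecker, add_zero, Finset.sum_const, Finset.card_univ,
            Fintype.card_fin, Nat.cast_smul_eq_nsmul]
  have hsumM : star ψ ⬝ᵥ (∑ j, M j).mulVec ψ = (n : ℂ) := by
    rw [hM]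
    rw [Finset.sum_comm] at hmax
    exact hmax
  -- variance computation
  set v : Fin n → (Fin dA × Fin dB → ℂ) := fun j => (M j).mulVec ψ - ψ with hv
  have hterm : ∀ j, star (v j) ⬝ᵥ v j
      = star ψ ⬝ᵥ (M j * M j).mulVec ψ - 2 * (star ψ ⬝ᵥ (M j).mulVec ψ) + 1 := by
    intro j
    have hstar : star ((M j).mulVec ψ) ⬝ᵥ ((M j).mulVec ψ)
        = star ψ ⬝ᵥ (M j * M j).mulVec ψ := by
      rw [Matrix.star_mulVec, hMH, ← Matrix.dotProduct_mulVec, Matrix.mulVec_mulVec]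
    have hstar2 : star ((M j).mulVec ψ) ⬝ᵥ ψ = star ψ ⬝ᵥ (M j).mulVec ψ := by
      rw [Matrix.star_mulVec, hMH, ← Matrix.dotProduct_mulVec]
    rw [hv]
    simp only [star_sub, sub_dotProduct, dotProduct_sub]
    rw [hstar, hstar2, hψ]
    ring
  have hvsum : ∑ j, star (v j) ⬝ᵥ v j = 0 := by
    have e : ∑ j, star (v j) ⬝ᵥ v j
        = star ψ ⬝ᵥ (∑ j, M j * M j).mulVec ψ
          - 2 * (star ψ ⬝ᵥ (∑ j, M j).mulVec ψ) + (n : ℂ) := by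
      rw [Finset.sum_congr rfl fun j _ => hterm j]
      rw [Finset.sum_add_distrib, Finset.sum_sub_distrib]
      rw [sum_mulVec', dotProduct_sum', sum_mulVec' univ M ψ, dotProduct_sum',
        Finset.mul_sum]
      simp
    rw [e, hsumM2, hsumM, Matrix.smul_mulVec, Matrix.one_mulVec,
      dotProduct_smul, hψ]
    simp
    ring
  have hveq0 : ∀ j, v j = 0 := by
    intro j
    have hnn : ∀ j' ∈ (univ : Finset (Fin n)), (0:ℂ) ≤ star (v j') ⬝ᵥ v j' :=
      fun j' _ => dotProduct_star_self_nonneg _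
    have := (Finset.sum_eq_zero_iff_of_nonneg hnn).mp hvsum j (Finset.mem_univ j)
    exact dotProduct_star_self_eq_zero.mp this
  have part1 : ∀ j, (M j).mulVec ψ = ψ := by
    intro j
    have := hveq0 j
    rw [hv] at this
    exact sub_eq_zero.mp this
  -- Part 2
  have hTzero : ∀ j, T j = 0 := by
    intro j
    have hM2ψ : (M j * M j).mulVec ψ = ψ := by
      rw [← Matrix.mulVec_mulVec, part1 j, part1 j]
    rw [hM2 j] at hM2ψ
    rw [Matrix.add_mulVec, Matrix.one_mulVec] at hM2ψ
    have hTψ : (T j ⊗ₖ (1 : Matrix (Fin dB) (Fin dB) ℂ)).mulVec ψ = 0 :=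
      add_eq_left.mp hM2ψ
    -- entrywise: ∀ a b, ∑ a', T j a a' * ψ (a', b) = 0
    have hrow : ∀ a b, ∑ a', T j a a' * ψ (a', b) = 0 := by
      intro a b
      have := congrFun hTψ (a, b)
      simp only [Matrix.mulVec, dotProduct, Fintype.sum_prod_type, kroneckerMap_apply,
        Matrix.one_apply, mul_ite, mul_one, mul_zero, ite_mul, zero_mul,
        Finset.sum_ite_eq, Finset.mem_univ, if_true, Pi.zero_apply] at this
      convert this using 1
    have hTrho : T j * rhoA ψ = 0 := by
      ext a a''
      show ∑ a', T j a a' * rhoA ψ a' a'' = 0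
      have : ∑ a', T j a a' * rhoA ψ a' a''
          = ∑ b, (∑ a', T j a a' * ψ (a', b)) * star (ψ (a'', b)) := by
        simp only [rhoA, Matrix.of_apply, Finset.mul_sum, Finset.sum_mul]
        rw [Finset.sum_comm]
        refine Finset.sum_congr rfl fun b _ => Finset.sum_congr rfl fun a' _ => by ring
      rw [this]
      refine Finset.sum_eq_zero fun b _ => by rw [hrow a b, zero_mul]
    obtain ⟨u, hu⟩ := hfull
    have hinv := u.mul_inv
    rw [hu] at hinv
    calc T j = T j * (rhoA ψ * (↑u⁻¹ : Matrix (Fin dA) (Fin dA) ℂ)) := by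
          rw [hinv, mul_one]
      _ = (T j * rhoA ψ) * (↑u⁻¹ : Matrix (Fin dA) (Fin dA) ℂ) := by rw [mul_assoc]
      _ = 0 := by rw [hTrho, zero_mul]
  constructor
  · exact part1
  · intro j
    have := hTzero j
    rw [hT] at this
    rw [← this]
    refine Finset.sum_congr rfl fun i _ => Finset.sum_congr rfl fun k _ => ?_
    split
    · rw [← Complex.ofReal_mul]
      ext a b
      simp [Complex.real_smul]
      ring
    · simp
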